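/- Any two free Steiner triple systems with infinite free bases are elementarily equivalent. -/

import Mathlib

universe u v

open FirstOrder

/-- The language of Steiner quasigroups: a single binary function symbol. -/
def sqLang : FirstOrder.Language :=
  ⟨fun n => match n with | 2 => Unit | _ => Empty, fun _ => Empty⟩

/-- The `sqLang`-structure given by a binary operation. -/
def sqStructure {M : Type u} (op : M → M → M) : sqLang.Structure M where
  funMap {n} f x :=
    match n, f with
    | 2, _ => op (x 0) (x 1)
  RelMap {n} r _ := nomatch r

/-- A Steiner quasigroup operation. -/
def IsSQ {M : Type u} (op : M → M → M) : Prop :=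
  (∀ x y, op x y = op y x) ∧ (∀ x, op x x = x) ∧ (∀ x y, op x (op x y) = y)

/-- `A` generates `M` under `op`. -/
def Generates {M : Type u} (op : M → M → M) (A : Set M) : Prop :=
  ∀ S : Set M, A ⊆ S → (∀ x ∈ S, ∀ y ∈ S, op x y ∈ S) → S = Set.univ

/-- `M` is freely generated by `A`. -/
def FreelyGenerated {M : Type u} (op : M → M → M) (A : Set M) : Prop :=
  Generates op A ∧
    ∀ (P : Type v) (opP : P → P → P), IsSQ opP → ∀ φ : A → P,
      ∃ f : M → P, (∀ x y, f (op x y) = opP (f x) (f y)) ∧ ∀ a : A, f a = φ a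

namespace SQFree

open FirstOrder.Language

/-- The binary function symbol. -/
def sqF : sqLang.Functions 2 := Unit.unit

variable {M : Type u} {N : Type u} [iM : sqLang.Structure M] [iN : sqLang.Structure N]

/-- The operation of an arbitrary `sqLang`-structure. -/
def sop (x y : M) : M := Structure.funMap sqF ![x, y]

theorem sop_sqStructure {M : Type u} (op : M → M → M) (x y : M) :
    @sop M (sqStructure op) x y = op x y := rfl

theorem closedUnder' {s : Set M} (h : ∀ x ∈ s, ∀ y ∈ s, sop x y ∈ s) {n} (F : sqLang.Functions n) :
    ClosedUnder F s := by
  match n, F with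
  | 0, F => exact F.elim
  | 1, F => exact F.elim
  | (n+3), F => exact F.elim
  | 2, F =>
    intro x hx
    have hx2 : x = ![x 0, x 1] := by funext i; fin_cases i <;> rfl
    have hF : F = sqF := rfl
    rw [hF, hx2]
    exact h (x 0) (hx 0) (x 1) (hx 1)

theorem sop_mem (S : sqLang.Substructure M) {x y : M} (hx : x ∈ S) (hy : y ∈ S) :
    sop x y ∈ S := by
  apply S.fun_mem sqF ![x, y]
  intro i; fin_cases i <;> assumption

theorem mem_closure_finite {s : Set M} {x : M} (hx : x ∈ Substructure.closure sqLang s) :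
    ∃ F : Set M, F.Finite ∧ F ⊆ s ∧ x ∈ Substructure.closure sqLang F := by
  refine Substructure.closure_induction hx (fun y hy => ⟨{y}, Set.finite_singleton y,
    Set.singleton_subset_iff.2 hy, Substructure.subset_closure rfl⟩) ?_
  intro n F
  apply closedUnder'
  rintro a ⟨Fa, hFa, hFas, hamem⟩ b ⟨Fb, hFb, hFbs, hbmem⟩
  refine ⟨Fa ∪ Fb, hFa.union hFb, Set.union_subset hFas hFbs, ?_⟩
  exact sop_mem _ (Substructure.closure_mono Set.subset_union_left hamem)
    (Substructure.closure_mono Set.subset_union_right hbmem)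

theorem closure_top_of_generates {A : Set M}
    (hgen : ∀ S : Set M, A ⊆ S → (∀ x ∈ S, ∀ y ∈ S, sop x y ∈ S) → S = Set.univ) :
    Substructure.closure sqLang A = ⊤ := by
  apply SetLike.ext'
  rw [Substructure.coe_top]
  exact hgen _ Substructure.subset_closure (fun x hx y hy => sop_mem _ hx hy)

/-- Equality of op-preserving maps on a closure. -/
theorem hom_eqOn_closure {f g : M → N}
    (hf : ∀ x y, f (sop x y) = sop (f x) (f y)) (hg : ∀ x y, g (sop x y) = sop (g x) (g y))
    {s : Set M} (h : ∀ x ∈ s, f x = g x) {x : M}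
    (hx : x ∈ Substructure.closure sqLang s) : f x = g x := by
  refine Substructure.closure_induction hx h ?_
  intro n F
  apply closedUnder'
  intro a ha b hb
  show f (sop a b) = g (sop a b)
  rw [hf, hg, Set.mem_setOf_eq.mp ha, Set.mem_setOf_eq.mp hb]

theorem hom_maps_closure {f : M → N}
    (hf : ∀ x y, f (sop x y) = sop (f x) (f y)) {s : Set M} {t : Set N}
    (h : ∀ x ∈ s, f x ∈ Substructure.closure sqLang t) {x : M}
    (hx : x ∈ Substructure.closure sqLang s) : f x ∈ Substructure.closure sqLang t := by
  refine Substructure.closure_induction hx h ?_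
  intro n F
  apply closedUnder'
  intro a ha b hb
  show f (sop a b) ∈ Substructure.closure sqLang t
  rw [hf]
  exact sop_mem _ ha hb

/-- Build a first-order equivalence from an op-preserving bijection. -/
def equivOf (f : M ≃ N) (hf : ∀ x y, f (sop x y) = sop (f x) (f y)) : M ≃[sqLang] N where
  toEquiv := f
  map_fun' {n} F x := by
    match n, F with
    | 0, F => exact F.elim
    | 1, F => exact F.elim
    | (n+3), F => exact F.elim
    | 2, F =>
      have hx2 : x = ![x 0, x 1] := by funext i; fin_cases i <;> rfl
      have hF : F = sqF := rfl
      have hc : f.toFun ∘ ![x 0, x 1] = ![f (x 0), f (x 1)] := by funext i; fin_cases i <;> rfl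
      rw [hF, hx2, hc]
      exact hf (x 0) (x 1)
  map_rel' {n} r x := r.elim

/-- An involution of the free base extends to an automorphism. -/
theorem exists_equiv_fix {A : Set M}
    (hgen : Substructure.closure sqLang A = ⊤)
    (hfree : ∀ φ : A → M, ∃ f : M → M,
      (∀ x y, f (sop x y) = sop (f x) (f y)) ∧ ∀ a : A, f ↑a = φ a)
    (p : A → A) (hp : ∀ a, p (p a) = a) :
    ∃ σ : M ≃[sqLang] M, (∀ a : A, σ ↑a = ↑(p a)) ∧
      (∀ x y, σ (sop x y) = sop (σ x) (σ y)) := by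
  obtain ⟨f, hf, hfa⟩ := hfree (fun a => ↑(p a))
  have hff : ∀ x, f (f x) = x := by
    intro x
    have hx : x ∈ Substructure.closure sqLang A := by rw [hgen]; trivial
    refine hom_eqOn_closure (f := f ∘ f) (g := id) ?_ (fun _ _ => rfl) ?_ hx
    · intro x y; simp only [Function.comp_apply, hf]
    · intro a ha
      show f (f a) = a
      rw [hfa ⟨a, ha⟩, hfa (p ⟨a, ha⟩), hp]
  refine ⟨equivOf ⟨f, f, hff, hff⟩ hf, ?_, hf⟩
  intro a
  exact hfa a

theorem closure_isElementary {A : Set M}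
    (hgen : Substructure.closure sqLang A = ⊤)
    (hfree : ∀ φ : A → M, ∃ f : M → M,
      (∀ x y, f (sop x y) = sop (f x) (f y)) ∧ ∀ a : A, f ↑a = φ a)
    {A₀ : Set M} (h₀ : A₀ ⊆ A) (hinf : A₀.Infinite) :
    (Substructure.closure sqLang A₀).IsElementary := by
  classical
  apply Substructure.isElementary_of_exists
  intro n φ x a ha
  have hsupp : ∀ i : Fin n, ∃ F : Set M, F.Finite ∧ F ⊆ A₀ ∧
      (↑(x i) : M) ∈ Substructure.closure sqLang F := fun i => mem_closure_finite (x i).2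
  choose F hFfin hFsub hFmem using hsupp
  set A₁ : Set M := ⋃ i, F i with hA₁def
  have hA₁fin : A₁.Finite := Set.finite_iUnion hFfin
  have hA₁sub : A₁ ⊆ A₀ := Set.iUnion_subset hFsub
  have hatop : a ∈ Substructure.closure sqLang A := by rw [hgen]; trivial
  obtain ⟨S', hS'fin, hS'sub, hS'mem⟩ := mem_closure_finite hatop
  set T : Set M := S' \ A₀ with hTdef
  have hTfin : T.Finite := hS'fin.diff
  set C : Set M := A₀ \ (A₁ ∪ S') with hCdef
  have hCinf : C.Infinite := hinf.diff (hA₁fin.union hS'fin)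
  haveI : Fintype ↥T := hTfin.fintype
  let jj : ↥T ↪ ↥C :=
    (Fintype.equivFin ↥T).toEmbedding.trans (Fin.valEmbedding.trans hCinf.natEmbedding)
  have hjC : ∀ t : ↥T, (↑(jj t) : M) ∈ C := fun t => (jj t).2
  have hjA₀ : ∀ t : ↥T, (↑(jj t) : M) ∈ A₀ := fun t => (hjC t).1
  have hjnT : ∀ t : ↥T, (↑(jj t) : M) ∉ T := fun t ht => ht.2 (hjA₀ t)
  have hjnA₁ : ∀ t : ↥T, (↑(jj t) : M) ∉ A₁ := fun t ht => (hjC t).2 (Or.inl ht)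
  have hjnS' : ∀ t : ↥T, (↑(jj t) : M) ∉ S' := fun t ht => (hjC t).2 (Or.inr ht)
  -- the involution
  let p : ↥A → ↥A := fun z =>
    if h1 : (z : M) ∈ T then ⟨↑(jj ⟨↑z, h1⟩), h₀ (hjA₀ ⟨↑z, h1⟩)⟩
    else if h2 : ∃ t : ↥T, (↑(jj t) : M) = ↑z then
      ⟨↑(Classical.choose h2), hS'sub (Classical.choose h2).2.1⟩
    else z
  have hp1 : ∀ (z : ↥A) (h1 : (z : M) ∈ T), p z = ⟨↑(jj ⟨↑z, h1⟩), h₀ (hjA₀ ⟨↑z, h1⟩)⟩ :=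
    fun z h1 => dif_pos h1
  have hp3 : ∀ (z : ↥A), (z : M) ∉ T → ¬(∃ t : ↥T, (↑(jj t) : M) = ↑z) → p z = z := by
    intro z h1 h2
    show dite _ _ _ = z
    rw [dif_neg h1, dif_neg h2]
  have hp : ∀ z, p (p z) = z := by
    intro z
    by_cases h1 : (z : M) ∈ T
    · rw [hp1 z h1]
      have hw1 : (↑(jj ⟨↑z, h1⟩) : M) ∉ T := hjnT _
      have hw2 : ∃ t : ↥T, (↑(jj t) : M) = ↑(jj ⟨↑z, h1⟩) := ⟨⟨↑z, h1⟩, rfl⟩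
      show dite _ _ _ = z
      rw [dif_neg hw1, dif_pos hw2]
      have := Classical.choose_spec hw2
      have ht : Classical.choose hw2 = ⟨↑z, h1⟩ := jj.injective (Subtype.ext this)
      apply Subtype.ext
      rw [ht]
    · by_cases h2 : ∃ t : ↥T, (↑(jj t) : M) = ↑z
      · have hpz : p z = ⟨↑(Classical.choose h2), hS'sub (Classical.choose h2).2.1⟩ := by
          show dite _ _ _ = _
          rw [dif_neg h1, dif_pos h2]
        rw [hpz]
        have hmemT : (↑(Classical.choose h2) : M) ∈ T := (Classical.choose h2).2
        rw [hp1 _ hmemT]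
        apply Subtype.ext
        show (↑(jj ⟨↑(Classical.choose h2), hmemT⟩) : M) = ↑z
        have : (⟨↑(Classical.choose h2), hmemT⟩ : ↥T) = Classical.choose h2 := Subtype.ext rfl
        rw [this]
        exact Classical.choose_spec h2
      · rw [hp3 z h1 h2, hp3 z h1 h2]
  obtain ⟨σ, hσA, hσhom⟩ := exists_equiv_fix hgen hfree p hp
  -- σ fixes A₁ pointwise, hence fixes each x i
  have hfixA₁ : ∀ b ∈ A₁, σ b = b := by
    intro b hb
    have hbA : b ∈ A := h₀ (hA₁sub hb)
    have h1 : (⟨b, hbA⟩ : ↥A).val ∉ T := fun ht => ht.2 (hA₁sub hb)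
    have h2 : ¬(∃ t : ↥T, (↑(jj t) : M) = b) := by
      rintro ⟨t, ht⟩
      exact hjnA₁ t (ht ▸ hb)
    have := hσA ⟨b, hbA⟩
    rw [hp3 ⟨b, hbA⟩ h1 h2] at this
    exact this
  have hfixx : ∀ i : Fin n, σ (↑(x i) : M) = ↑(x i) := by
    intro i
    refine hom_eqOn_closure hσhom (fun _ _ => rfl) (s := A₁) hfixA₁ ?_
    exact Substructure.closure_mono (Set.subset_iUnion F i) (hFmem i)
  -- σ a lands in the closure of A₀
  have hσa : σ a ∈ Substructure.closure sqLang A₀ := by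
    refine hom_maps_closure hσhom (s := S') ?_ hS'mem
    intro b hb
    have hbA : b ∈ A := hS'sub hb
    by_cases h1 : b ∈ T
    · have := hσA ⟨b, hbA⟩
      rw [hp1 ⟨b, hbA⟩ h1] at this
      rw [this]
      exact Substructure.subset_closure (hjA₀ _)
    · have hbA₀ : b ∈ A₀ := by
        by_contra hc
        exact h1 ⟨hb, hc⟩
      have h2 : ¬(∃ t : ↥T, (↑(jj t) : M) = b) := by
        rintro ⟨t, ht⟩
        exact hjnS' t (ht ▸ hb)
      have := hσA ⟨b, hbA⟩
      rw [hp3 ⟨b, hbA⟩ h1 h2] at this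
      rw [this]
      exact Substructure.subset_closure hbA₀
  refine ⟨⟨σ a, hσa⟩, ?_⟩
  have h2 := (StrongHomClass.realize_boundedFormula σ φ
    (v := default) (xs := Fin.snoc ((↑) ∘ x) a)).2 ha
  rw [Fin.comp_snoc] at h2
  have hv : (⇑σ ∘ default : Empty → M) = default := Subsingleton.elim _ _
  have hxfix : ⇑σ ∘ ((↑) ∘ x) = ((↑) ∘ x : Fin n → M) := by
    funext i
    exact hfixx i
  rw [hv, hxfix] at h2
  exact h2

theorem funMap_two (F : sqLang.Functions 2) (v : Fin 2 → M) :
    Structure.funMap F v = sop (v 0) (v 1) := by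
  have hF : F = sqF := rfl
  have hv : v = ![v 0, v 1] := by funext i; fin_cases i <;> rfl
  rw [hF, hv]
  rfl

theorem sop_subtype (S : sqLang.Substructure M) (x y : ↥S) :
    (↑(sop x y) : M) = sop (↑x) (↑y) := by
  show (Structure.funMap sqF (fun i => (↑(![x, y] i) : M))) = _
  have h : (fun i => (↑(![x, y] i) : M)) = ![↑x, ↑y] := by funext i; fin_cases i <;> rfl
  rw [h]
  rfl

/-- An equivalence between substructures from mutually inverse op-preserving maps. -/
noncomputable def subEquivOf {S : sqLang.Substructure M} {S' : sqLang.Substructure N}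
    (f : M → N) (g : N → M) (hf : ∀ x y, f (sop x y) = sop (f x) (f y))
    (hfS : ∀ x ∈ S, f x ∈ S') (hgS : ∀ y ∈ S', g y ∈ S)
    (hgf : ∀ x ∈ S, g (f x) = x) (hfg : ∀ y ∈ S', f (g y) = y) :
    ↥S ≃[sqLang] ↥S' where
  toFun z := ⟨f ↑z, hfS _ z.2⟩
  invFun z := ⟨g ↑z, hgS _ z.2⟩
  left_inv z := Subtype.ext (hgf _ z.2)
  right_inv z := Subtype.ext (hfg _ z.2)
  map_fun' {n} F xs := by
    match n, F with
    | 0, F => exact F.elim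
    | 1, F => exact F.elim
    | (k+3), F => exact F.elim
    | 2, F =>
      apply Subtype.ext
      show f ↑(Structure.funMap F xs) = ↑(Structure.funMap F _)
      rw [funMap_two F xs, funMap_two F _, sop_subtype]
      exact hf _ _
  map_rel' {n} r xs := r.elim

theorem exists_iso {A : Set M} {B : Set N}
    (hfreeAB : ∀ φ : A → N, ∃ f : M → N,
      (∀ x y, f (sop x y) = sop (f x) (f y)) ∧ ∀ a : A, f ↑a = φ a)
    (hfreeBA : ∀ φ : B → M, ∃ g : N → M,
      (∀ x y, g (sop x y) = sop (g x) (g y)) ∧ ∀ b : B, g ↑b = φ b)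
    {A₀ : Set M} {B₀ : Set N} (hA₀ : A₀ ⊆ A) (hB₀ : B₀ ⊆ B)
    (e : ↥A₀ ≃ ↥B₀) (b₀ : N) (a₀ : M) :
    Nonempty ((↥(Substructure.closure sqLang A₀)) ≃[sqLang]
      (↥(Substructure.closure sqLang B₀))) := by
  classical
  obtain ⟨f, hf, hfa⟩ := hfreeAB (fun a => if h : (↑a : M) ∈ A₀ then ↑(e ⟨↑a, h⟩) else b₀)
  obtain ⟨g, hg, hgb⟩ := hfreeBA (fun b => if h : (↑b : N) ∈ B₀ then ↑(e.symm ⟨↑b, h⟩) else a₀)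
  have hfA₀ : ∀ (x : M) (h : x ∈ A₀), f x = ↑(e ⟨x, h⟩) := by
    intro x h
    have := hfa ⟨x, hA₀ h⟩
    rw [this]
    exact dif_pos h
  have hgB₀ : ∀ (y : N) (h : y ∈ B₀), g y = ↑(e.symm ⟨y, h⟩) := by
    intro y h
    have := hgb ⟨y, hB₀ h⟩
    rw [this]
    exact dif_pos h
  have hgfA₀ : ∀ x ∈ A₀, g (f x) = x := by
    intro x h
    rw [hfA₀ x h, hgB₀ _ (e ⟨x, h⟩).2]
    have h1 : (⟨↑(e ⟨x, h⟩), (e ⟨x, h⟩).2⟩ : ↥B₀) = e ⟨x, h⟩ := Subtype.ext rfl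
    rw [h1, Equiv.symm_apply_apply]
  have hfgB₀ : ∀ y ∈ B₀, f (g y) = y := by
    intro y h
    rw [hgB₀ y h, hfA₀ _ (e.symm ⟨y, h⟩).2]
    have h1 : (⟨↑(e.symm ⟨y, h⟩), (e.symm ⟨y, h⟩).2⟩ : ↥A₀) = e.symm ⟨y, h⟩ := Subtype.ext rfl
    rw [h1, Equiv.apply_symm_apply]
  have hgf : ∀ x ∈ Substructure.closure sqLang A₀, g (f x) = x := by
    intro x hx
    exact hom_eqOn_closure (f := g ∘ f) (g := id)
      (by intro x y; simp only [Function.comp_apply, hf, hg]) (fun _ _ => rfl) hgfA₀ hx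
  have hfg : ∀ y ∈ Substructure.closure sqLang B₀, f (g y) = y := by
    intro y hy
    exact hom_eqOn_closure (f := f ∘ g) (g := id)
      (by intro x y; simp only [Function.comp_apply, hf, hg]) (fun _ _ => rfl) hfgB₀ hy
  have hfmap : ∀ x ∈ Substructure.closure sqLang A₀, f x ∈ Substructure.closure sqLang B₀ := by
    intro x hx
    refine hom_maps_closure hf ?_ hx
    intro z hz
    rw [hfA₀ z hz]
    exact Substructure.subset_closure (e ⟨z, hz⟩).2
  have hgmap : ∀ y ∈ Substructure.closure sqLang B₀, g y ∈ Substructure.closure sqLang A₀ := by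
    intro y hy
    refine hom_maps_closure hg ?_ hy
    intro z hz
    rw [hgB₀ z hz]
    exact Substructure.subset_closure (e.symm ⟨z, hz⟩).2
  exact ⟨subEquivOf f g hf hfmap hgmap hgf hfg⟩

end SQFree

open SQFree in
/-- Any two free Steiner triple systems with infinite free bases are elementarily
equivalent. -/
theorem free_STS_elementarily_equivalent {M N : Type u}
    (opM : M → M → M) (opN : N → N → N) (hM : IsSQ opM) (hN : IsSQ opN)
    (A : Set M) (B : Set N)
    (hA : FreelyGenerated.{u, u} opM A) (hAinf : A.Infinite)
    (hB : FreelyGenerated.{u, u} opN B) (hBinf : B.Infinite) :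
    @FirstOrder.Language.ElementarilyEquivalent sqLang M N
      (sqStructure opM) (sqStructure opN) := by
  letI iM : sqLang.Structure M := sqStructure opM
  letI iN : sqLang.Structure N := sqStructure opN
  have hgenA : FirstOrder.Language.Substructure.closure sqLang A = ⊤ :=
    closure_top_of_generates hA.1
  have hgenB : FirstOrder.Language.Substructure.closure sqLang B = ⊤ :=
    closure_top_of_generates hB.1
  have hfreeMM : ∀ φ : A → M, ∃ f : M → M,
      (∀ x y, f (sop x y) = sop (f x) (f y)) ∧ ∀ a : A, f ↑a = φ a :=
    fun φ => hA.2 M opM hM φ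
  have hfreeNN : ∀ φ : B → N, ∃ f : N → N,
      (∀ x y, f (sop x y) = sop (f x) (f y)) ∧ ∀ b : B, f ↑b = φ b :=
    fun φ => hB.2 N opN hN φ
  have hfreeMN : ∀ φ : A → N, ∃ f : M → N,
      (∀ x y, f (sop x y) = sop (f x) (f y)) ∧ ∀ a : A, f ↑a = φ a :=
    fun φ => hA.2 N opN hN φ
  have hfreeNM : ∀ φ : B → M, ∃ g : N → M,
      (∀ x y, g (sop x y) = sop (g x) (g y)) ∧ ∀ b : B, g ↑b = φ b :=
    fun φ => hB.2 M opM hM φ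
  let eA := hAinf.natEmbedding
  let eB := hBinf.natEmbedding
  have hinjA : Function.Injective (fun n : ℕ => (↑(eA n) : M)) :=
    fun m n h => eA.injective (Subtype.ext h)
  have hinjB : Function.Injective (fun n : ℕ => (↑(eB n) : N)) :=
    fun m n h => eB.injective (Subtype.ext h)
  set A₀ : Set M := Set.range (fun n : ℕ => (↑(eA n) : M)) with hA₀def
  set B₀ : Set N := Set.range (fun n : ℕ => (↑(eB n) : N)) with hB₀def
  have hA₀sub : A₀ ⊆ A := by rintro x ⟨n, rfl⟩; exact (eA n).2
  have hB₀sub : B₀ ⊆ B := by rintro y ⟨n, rfl⟩; exact (eB n).2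
  have hA₀inf : A₀.Infinite := Set.infinite_range_of_injective hinjA
  have hB₀inf : B₀.Infinite := Set.infinite_range_of_injective hinjB
  have EM := closure_isElementary hgenA hfreeMM hA₀sub hA₀inf
  have EN := closure_isElementary hgenB hfreeNN hB₀sub hB₀inf
  let e : ↥A₀ ≃ ↥B₀ := (Equiv.ofInjective _ hinjA).symm.trans (Equiv.ofInjective _ hinjB)
  obtain ⟨iso⟩ := exists_iso hfreeMN hfreeNM hA₀sub hB₀sub e (↑(eB 0)) (↑(eA 0))
  let SM : sqLang.ElementarySubstructure M := ⟨_, EM⟩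
  let SN : sqLang.ElementarySubstructure N := ⟨_, EN⟩
  exact (SM.elementarilyEquivalent.symm.trans
    iso.toElementaryEmbedding.elementarilyEquivalent).trans SN.elementarilyEquivalent
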